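/- Let V be a finite set and let f be a nonnegative submodular function on subsets of V, i.e., f(A) ≥ 0 for all A ⊆ V and f(A∪B) + f(A∩B) ≤ f(A) + f(B) for all A, B ⊆ V. Let S ⊆ V, let p ∈ [0,1], and let R be a random subset of V∖S (with an arbitrary, not necessarily independent, joint distribution) such that P(v ∈ R) ≤ p for every v ∈ V∖S. Then E[f(S ∪ R)] ≥ (1 − p)·f(S). (Lemma B.1, submodular sampling lemma.) -/

import Mathlib

open Finset

private lemma sq_card_ineq {a b c d : ℕ} (hsum : c + d = a + b) (hca : a < c) (hcb : b < c) :
    (a:ℝ)^2 + (b:ℝ)^2 < (c:ℝ)^2 + (d:ℝ)^2 := by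
  have h1 : (c:ℝ) + (d:ℝ) = (a:ℝ) + (b:ℝ) := by exact_mod_cast hsum
  have h2 : (a:ℝ) < c := by exact_mod_cast hca
  have h3 : (b:ℝ) < c := by exact_mod_cast hcb
  nlinarith [mul_pos (sub_pos.2 h2) (sub_pos.2 h3)]

/-- Uncrossing step: if the support of `ν` contains two incomparable sets, one can modify
`ν` keeping all constraints, not increasing the expectation of the submodular `g`, and
strictly increasing the potential `∑ ν R * |R|²`. -/
private lemma uncross_step {V : Type*} [Fintype V] [DecidableEq V]
    (g : Finset V → ℝ)
    (hgsub : ∀ A B : Finset V, g (A ∪ B) + g (A ∩ B) ≤ g A + g B)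
    (S : Finset V) (p : ℝ)
    (ν : Finset V → ℝ) (hν0 : ∀ R, 0 ≤ ν R) (hν1 : ∑ R : Finset V, ν R = 1)
    (hνs : ∀ R, ν R ≠ 0 → R ⊆ Sᶜ)
    (hνm : ∀ v ∉ S, ∑ R ∈ Finset.univ.filter (fun R : Finset V => v ∈ R), ν R ≤ p)
    (A B : Finset V) (hA : ν A ≠ 0) (hB : ν B ≠ 0) (hAB : ¬ A ⊆ B) (hBA : ¬ B ⊆ A) :
    ∃ ν' : Finset V → ℝ, (∀ R, 0 ≤ ν' R) ∧ (∑ R : Finset V, ν' R = 1) ∧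
      (∀ R, ν' R ≠ 0 → R ⊆ Sᶜ) ∧
      (∀ v ∉ S, ∑ R ∈ Finset.univ.filter (fun R : Finset V => v ∈ R), ν' R ≤ p) ∧
      (∑ R : Finset V, ν' R * g R ≤ ∑ R : Finset V, ν R * g R) ∧
      (∑ R : Finset V, ν R * ((R.card : ℝ))^2 < ∑ R : Finset V, ν' R * ((R.card : ℝ))^2) := by
  classical
  set δ := min (ν A) (ν B) with hδ
  have hδA : δ ≤ ν A := min_le_left _ _
  have hδB : δ ≤ ν B := min_le_right _ _
  have hδpos : 0 < δ :=
    lt_min ((hν0 A).lt_of_ne (Ne.symm hA)) ((hν0 B).lt_of_ne (Ne.symm hB))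
  have hABne : A ≠ B := fun h => hAB (h ▸ subset_rfl)
  have hUA : A ∪ B ≠ A := fun h => hBA (by rw [← h]; exact subset_union_right)
  have hUB : A ∪ B ≠ B := fun h => hAB (by rw [← h]; exact subset_union_left)
  have hIA : A ∩ B ≠ A := fun h => hAB (by
    have : A ⊆ A ∩ B := h.symm.le
    exact this.trans inter_subset_right)
  have hIB : A ∩ B ≠ B := fun h => hBA (by
    have : B ⊆ A ∩ B := h.symm.le
    exact this.trans inter_subset_left)
  have hUI : A ∪ B ≠ A ∩ B := by
    intro h
    exact hAB (subset_union_left.trans (h.le.trans inter_subset_right))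
  set ν' : Finset V → ℝ := fun R =>
    ν R + δ * ((if R = A ∪ B then (1:ℝ) else 0) + (if R = A ∩ B then 1 else 0)
      - (if R = A then 1 else 0) - (if R = B then 1 else 0)) with hν'def
  -- pointwise values
  have hv'U : ν' (A ∪ B) = ν (A ∪ B) + δ := by
    simp only [hν'def, if_neg hUI, if_neg hUA, if_neg hUB]; simp
  have hv'I : ν' (A ∩ B) = ν (A ∩ B) + δ := by
    simp only [hν'def, if_neg hUI.symm, if_neg hIA, if_neg hIB]; simp
  have hv'A : ν' A = ν A - δ := by
    simp only [hν'def, if_neg (Ne.symm hUA), if_neg (Ne.symm hIA), if_neg hABne]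
    simp [sub_eq_add_neg]
  have hv'B : ν' B = ν B - δ := by
    simp only [hν'def, if_neg (Ne.symm hUB), if_neg (Ne.symm hIB),
      if_neg (Ne.symm hABne)]
    simp [sub_eq_add_neg]
  have hv'o : ∀ R, R ≠ A ∪ B → R ≠ A ∩ B → R ≠ A → R ≠ B → ν' R = ν R := by
    intro R h1 h2 h3 h4
    simp only [hν'def, if_neg h1, if_neg h2, if_neg h3, if_neg h4]; ring
  -- generic sum decomposition
  have hsum' : ∀ (s : Finset (Finset V)) (h : Finset V → ℝ),
      ∑ R ∈ s, ν' R * h R = (∑ R ∈ s, ν R * h R)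
        + δ * ((if A ∪ B ∈ s then h (A ∪ B) else 0) + (if A ∩ B ∈ s then h (A ∩ B) else 0)
          - (if A ∈ s then h A else 0) - (if B ∈ s then h B else 0)) := by
    intro s h
    have key : ∀ R, ν' R * h R = ν R * h R
        + δ * ((if R = A ∪ B then h R else 0) + (if R = A ∩ B then h R else 0)
          - (if R = A then h R else 0) - (if R = B then h R else 0)) := by
      intro R
      simp only [hν'def]
      split_ifs <;> ring
    calc ∑ R ∈ s, ν' R * h R
        = ∑ R ∈ s, (ν R * h R
            + δ * ((if R = A ∪ B then h R else 0) + (if R = A ∩ B then h R else 0)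
              - (if R = A then h R else 0) - (if R = B then h R else 0))) :=
          Finset.sum_congr rfl fun R _ => key R
      _ = (∑ R ∈ s, ν R * h R)
            + δ * ((if A ∪ B ∈ s then h (A ∪ B) else 0) + (if A ∩ B ∈ s then h (A ∩ B) else 0)
              - (if A ∈ s then h A else 0) - (if B ∈ s then h B else 0)) := by
          rw [Finset.sum_add_distrib, ← Finset.mul_sum]
          congr 1
          rw [Finset.sum_sub_distrib, Finset.sum_sub_distrib, Finset.sum_add_distrib,
            Finset.sum_ite_eq', Finset.sum_ite_eq', Finset.sum_ite_eq', Finset.sum_ite_eq']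
  refine ⟨ν', ?_, ?_, ?_, ?_, ?_, ?_⟩
  · -- nonneg
    intro R
    rcases eq_or_ne R (A ∪ B) with rfl | h1
    · rw [hv'U]; have := hν0 (A ∪ B); linarith
    rcases eq_or_ne R (A ∩ B) with rfl | h2
    · rw [hv'I]; have := hν0 (A ∩ B); linarith
    rcases eq_or_ne R A with rfl | h3
    · rw [hv'A]; linarith
    rcases eq_or_ne R B with rfl | h4
    · rw [hv'B]; linarith
    · rw [hv'o R h1 h2 h3 h4]; exact hν0 R
  · -- sum = 1
    have := hsum' Finset.univ (fun _ => 1)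
    simp only [mul_one, Finset.mem_univ, if_true] at this
    rw [this, hν1]; ring
  · -- support
    intro R hR
    by_contra hRS
    have hAS : A ⊆ Sᶜ := hνs A hA
    have hBS : B ⊆ Sᶜ := hνs B hB
    have h1 : R ≠ A ∪ B := by rintro rfl; exact hRS (union_subset hAS hBS)
    have h2 : R ≠ A ∩ B := by rintro rfl; exact hRS (inter_subset_left.trans hAS)
    have h3 : R ≠ A := by rintro rfl; exact hRS hAS
    have h4 : R ≠ B := by rintro rfl; exact hRS hBS
    have hz : ν R = 0 := by
      by_contra h
      exact hRS (hνs R h)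
    rw [hv'o R h1 h2 h3 h4, hz] at hR
    exact hR rfl
  · -- marginals
    intro v hv
    have hdec := hsum' (Finset.univ.filter (fun R : Finset V => v ∈ R)) (fun _ => 1)
    simp only [mul_one, Finset.mem_filter, Finset.mem_univ, true_and] at hdec
    have hbal : (if v ∈ A ∪ B then (1:ℝ) else 0) + (if v ∈ A ∩ B then (1:ℝ) else 0)
        - (if v ∈ A then (1:ℝ) else 0) - (if v ∈ B then (1:ℝ) else 0) = 0 := by
      by_cases hvA : v ∈ A <;> by_cases hvB : v ∈ B <;>
        simp [hvA, hvB, Finset.mem_union, Finset.mem_inter]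
    rw [hdec, hbal, mul_zero, add_zero]
    exact hνm v hv
  · -- expectation decreases
    have hdec := hsum' Finset.univ g
    simp only [Finset.mem_univ, if_true] at hdec
    rw [hdec]
    have := hgsub A B
    nlinarith
  · -- potential increases
    have hdec := hsum' Finset.univ (fun R => ((R.card : ℝ))^2)
    simp only [Finset.mem_univ, if_true] at hdec
    rw [hdec]
    have hcard : (A ∪ B).card + (A ∩ B).card = A.card + B.card :=
      Finset.card_union_add_card_inter A B
    have hAU : A.card < (A ∪ B).card :=
      Finset.card_lt_card (Finset.ssubset_iff_subset_ne.2 ⟨subset_union_left, Ne.symm hUA⟩)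
    have hBU : B.card < (A ∪ B).card :=
      Finset.card_lt_card (Finset.ssubset_iff_subset_ne.2 ⟨subset_union_right, Ne.symm hUB⟩)
    have := sq_card_ineq hcard hAU hBU
    nlinarith

/-- Chain case: if the support of `ν` is totally ordered by inclusion, the bound holds. -/
private lemma chain_case {V : Type*} [Fintype V] [DecidableEq V]
    (g : Finset V → ℝ) (hg0 : ∀ R, 0 ≤ g R)
    (S : Finset V) (p : ℝ) (hp0 : 0 ≤ p)
    (ν : Finset V → ℝ) (hν0 : ∀ R, 0 ≤ ν R) (hν1 : ∑ R : Finset V, ν R = 1)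
    (hνs : ∀ R, ν R ≠ 0 → R ⊆ Sᶜ)
    (hνm : ∀ v ∉ S, ∑ R ∈ Finset.univ.filter (fun R : Finset V => v ∈ R), ν R ≤ p)
    (hchain : ∀ A B : Finset V, ν A ≠ 0 → ν B ≠ 0 → A ⊆ B ∨ B ⊆ A) :
    (1 - p) * g ∅ ≤ ∑ R : Finset V, ν R * g R := by
  classical
  have hsplit : ν ∅ + ∑ R ∈ Finset.univ.filter (fun R : Finset V => ¬ R = ∅), ν R = 1 := by
    have := Finset.sum_filter_add_sum_filter_not Finset.univ (fun R : Finset V => R = ∅) ν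
    rw [Finset.filter_eq', if_pos (Finset.mem_univ _), Finset.sum_singleton] at this
    rw [this, hν1]
  have hne : 1 - p ≤ ν ∅ := by
    set T : Finset (Finset V) :=
      Finset.univ.filter (fun R : Finset V => ν R ≠ 0 ∧ R ≠ ∅) with hT
    by_cases hTne : T.Nonempty
    · obtain ⟨R₀, hR₀T, hmin⟩ := T.exists_minimal hTne
      rw [hT, Finset.mem_filter] at hR₀T
      obtain ⟨-, hR₀ν, hR₀ne⟩ := hR₀T
      obtain ⟨v, hvR₀⟩ := Finset.nonempty_iff_ne_empty.2 hR₀ne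
      have hvS : v ∉ S := by
        have := (hνs R₀ hR₀ν) hvR₀
        simpa using this
      have hall : ∀ R : Finset V, ν R ≠ 0 → R ≠ ∅ → v ∈ R := by
        intro R hRν hRne
        rcases hchain R R₀ hRν hR₀ν with h | h
        · have hRT : R ∈ T := by rw [hT, Finset.mem_filter]; exact ⟨Finset.mem_univ _, hRν, hRne⟩
          have hnot : ¬ R ⊂ R₀ := fun hlt => not_subset_of_ssubset hlt (hmin hRT (subset_of_ssubset hlt))
          have : R = R₀ := by
            by_contra hne'
            exact hnot (Finset.ssubset_iff_subset_ne.2 ⟨h, hne'⟩)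
          rw [this]; exact hvR₀
        · exact h hvR₀
      have step1 : ∑ R ∈ Finset.univ.filter (fun R : Finset V => ¬ R = ∅), ν R
          = ∑ R ∈ T, ν R := by
        refine (Finset.sum_subset ?_ ?_).symm
        · intro R hR
          rw [hT, Finset.mem_filter] at hR
          simp only [Finset.mem_filter, Finset.mem_univ, true_and]
          exact hR.2.2
        · intro R hR hRT
          rw [hT] at hRT
          simp only [Finset.mem_filter, Finset.mem_univ, true_and] at hR hRT
          by_contra h
          exact hRT ⟨h, hR⟩
      have step2 : ∑ R ∈ T, ν R
          ≤ ∑ R ∈ Finset.univ.filter (fun R : Finset V => v ∈ R), ν R := by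
        apply Finset.sum_le_sum_of_subset_of_nonneg
        · intro R hR
          rw [hT, Finset.mem_filter] at hR
          simp only [Finset.mem_filter, Finset.mem_univ, true_and]
          exact hall R hR.2.1 hR.2.2
        · intro R _ _; exact hν0 R
      have := (step1.trans_le step2).trans (hνm v hvS)
      linarith
    · have hz : ∑ R ∈ Finset.univ.filter (fun R : Finset V => ¬ R = ∅), ν R = 0 := by
        apply Finset.sum_eq_zero
        intro R hR
        simp only [Finset.mem_filter, Finset.mem_univ, true_and] at hR
        by_contra h
        exact hTne ⟨R, by rw [hT, Finset.mem_filter]; exact ⟨Finset.mem_univ _, h, hR⟩⟩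
      rw [hz, add_zero] at hsplit
      linarith
  calc (1 - p) * g ∅ ≤ ν ∅ * g ∅ := mul_le_mul_of_nonneg_right hne (hg0 ∅)
    _ ≤ ∑ R : Finset V, ν R * g R :=
        Finset.single_le_sum (fun R _ => mul_nonneg (hν0 R) (hg0 R)) (Finset.mem_univ ∅)

/-- Submodular sampling lemma (Lemma B.1): if `f` is a nonnegative submodular function,
`S ⊆ V`, and `R` is a random subset of `V \ S` (given by an arbitrary distribution `μ`
over subsets of `V \ S`) whose marginals satisfy `P(v ∈ R) ≤ p` for every `v ∉ S`, then
`E[f(S ∪ R)] ≥ (1 - p)·f(S)`. -/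
theorem submodular_sampling {V : Type*} [Fintype V] [DecidableEq V]
    (f : Finset V → ℝ)
    (hf0 : ∀ A : Finset V, 0 ≤ f A)
    (hsub : ∀ A B : Finset V, f (A ∪ B) + f (A ∩ B) ≤ f A + f B)
    (S : Finset V) (p : ℝ) (hp0 : 0 ≤ p) (hp1 : p ≤ 1)
    (μ : Finset V → ℝ) (hμ0 : ∀ R, 0 ≤ μ R) (hμ1 : ∑ R : Finset V, μ R = 1)
    (hsupp : ∀ R : Finset V, μ R ≠ 0 → R ⊆ Sᶜ)
    (hmarg : ∀ v ∉ S, ∑ R ∈ Finset.univ.filter (fun R : Finset V => v ∈ R), μ R ≤ p) :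
    (1 - p) * f S ≤ ∑ R : Finset V, μ R * f (S ∪ R) := by
  classical
  set g : Finset V → ℝ := fun R => f (S ∪ R) with hg
  have hg0 : ∀ R, 0 ≤ g R := fun R => hf0 _
  have hgsub : ∀ A B : Finset V, g (A ∪ B) + g (A ∩ B) ≤ g A + g B := by
    intro A B
    have h1 : (S ∪ A) ∪ (S ∪ B) = S ∪ (A ∪ B) := by
      ext x; simp only [Finset.mem_union]; tauto
    have h2 : (S ∪ A) ∩ (S ∪ B) = S ∪ (A ∩ B) := by
      ext x; simp only [Finset.mem_union, Finset.mem_inter]; tauto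
    have := hsub (S ∪ A) (S ∪ B)
    rw [h1, h2] at this
    simpa [hg] using this
  have hgS : g ∅ = f S := by rw [hg]; simp
  -- expectation and potential
  set Ex : (Finset V → ℝ) → ℝ := fun ν => ∑ R : Finset V, ν R * g R with hEx
  set Ph : (Finset V → ℝ) → ℝ := fun ν => ∑ R : Finset V, ν R * ((R.card : ℝ))^2 with hPh
  set K : Set (Finset V → ℝ) := {ν | (∀ R, 0 ≤ ν R) ∧ (∑ R : Finset V, ν R = 1) ∧
      (∀ R, ν R ≠ 0 → R ⊆ Sᶜ) ∧
      (∀ v ∉ S, ∑ R ∈ Finset.univ.filter (fun R : Finset V => v ∈ R), ν R ≤ p)} with hK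
  have hμK : μ ∈ K := ⟨hμ0, hμ1, hsupp, hmarg⟩
  -- topology facts
  have hExc : Continuous Ex :=
    continuous_finset_sum _ fun R _ => (continuous_apply R).mul continuous_const
  have hPhc : Continuous Ph :=
    continuous_finset_sum _ fun R _ => (continuous_apply R).mul continuous_const
  have hKclosed : IsClosed K := by
    have c1 : IsClosed {ν : Finset V → ℝ | ∀ R, 0 ≤ ν R} := by
      have : {ν : Finset V → ℝ | ∀ R, 0 ≤ ν R} = ⋂ R, {ν | 0 ≤ ν R} := by
        ext ν; simp
      rw [this]
      exact isClosed_iInter fun R => isClosed_le continuous_const (continuous_apply R)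
    have c2 : IsClosed {ν : Finset V → ℝ | ∑ R : Finset V, ν R = 1} :=
      isClosed_eq (continuous_finset_sum _ fun R _ => continuous_apply R) continuous_const
    have c3 : IsClosed {ν : Finset V → ℝ | ∀ R, ν R ≠ 0 → R ⊆ Sᶜ} := by
      have : {ν : Finset V → ℝ | ∀ R, ν R ≠ 0 → R ⊆ Sᶜ}
          = ⋂ R, {ν : Finset V → ℝ | ν R ≠ 0 → R ⊆ Sᶜ} := by
        ext ν; simp
      rw [this]
      refine isClosed_iInter fun R => ?_
      by_cases h : R ⊆ Sᶜ
      · have : {ν : Finset V → ℝ | ν R ≠ 0 → R ⊆ Sᶜ} = Set.univ := by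
          ext ν; simp [h]
        rw [this]; exact isClosed_univ
      · have : {ν : Finset V → ℝ | ν R ≠ 0 → R ⊆ Sᶜ} = {ν | ν R = 0} := by
          ext ν
          simp only [Set.mem_setOf_eq]
          constructor
          · intro hcond
            by_contra hz
            exact h (hcond hz)
          · intro hz hz'
            exact absurd hz hz'
        rw [this]
        exact isClosed_eq (continuous_apply R) continuous_const
    have c4 : IsClosed {ν : Finset V → ℝ |
        ∀ v ∉ S, ∑ R ∈ Finset.univ.filter (fun R : Finset V => v ∈ R), ν R ≤ p} := by
      have : {ν : Finset V → ℝ |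
          ∀ v ∉ S, ∑ R ∈ Finset.univ.filter (fun R : Finset V => v ∈ R), ν R ≤ p}
          = ⋂ v, {ν : Finset V → ℝ |
              v ∉ S → ∑ R ∈ Finset.univ.filter (fun R : Finset V => v ∈ R), ν R ≤ p} := by
        ext ν; simp
      rw [this]
      refine isClosed_iInter fun v => ?_
      by_cases h : v ∈ S
      · have : {ν : Finset V → ℝ |
            v ∉ S → ∑ R ∈ Finset.univ.filter (fun R : Finset V => v ∈ R), ν R ≤ p}
            = Set.univ := by
          ext ν; simp [h]
        rw [this]; exact isClosed_univ
      · have : {ν : Finset V → ℝ |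
            v ∉ S → ∑ R ∈ Finset.univ.filter (fun R : Finset V => v ∈ R), ν R ≤ p}
            = {ν | ∑ R ∈ Finset.univ.filter (fun R : Finset V => v ∈ R), ν R ≤ p} := by
          ext ν; simp [h]
        rw [this]
        exact isClosed_le (continuous_finset_sum _ fun R _ => continuous_apply R)
          continuous_const
    have : K = {ν : Finset V → ℝ | ∀ R, 0 ≤ ν R} ∩
        ({ν : Finset V → ℝ | ∑ R : Finset V, ν R = 1} ∩
          ({ν : Finset V → ℝ | ∀ R, ν R ≠ 0 → R ⊆ Sᶜ} ∩
            {ν : Finset V → ℝ |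
              ∀ v ∉ S, ∑ R ∈ Finset.univ.filter (fun R : Finset V => v ∈ R), ν R ≤ p})) := by
      ext ν
      simp only [hK, Set.mem_setOf_eq, Set.mem_inter_iff]
    rw [this]
    exact c1.inter (c2.inter (c3.inter c4))
  have hKcomp : IsCompact K := by
    refine IsCompact.of_isClosed_subset
      (isCompact_univ_pi fun _ : Finset V => isCompact_Icc (a := (0:ℝ)) (b := 1))
      hKclosed ?_
    intro ν hν R _
    refine ⟨hν.1 R, ?_⟩
    have := Finset.single_le_sum (f := ν) (fun i _ => hν.1 i) (Finset.mem_univ R)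
    rw [hν.2.1] at this
    exact this
  -- minimizer of Ex
  obtain ⟨ν₀, hν₀K, hmin⟩ := hKcomp.exists_isMinOn ⟨μ, hμK⟩ hExc.continuousOn
  -- maximizer of Ph among minimizers
  set K' : Set (Finset V → ℝ) := K ∩ {ν | Ex ν ≤ Ex ν₀} with hK'
  have hK'comp : IsCompact K' :=
    hKcomp.inter_right (isClosed_le hExc continuous_const)
  obtain ⟨ν, hνK', hmax⟩ := hK'comp.exists_isMaxOn ⟨ν₀, hν₀K, le_refl (Ex ν₀)⟩ hPhc.continuousOn
  obtain ⟨hνK, hνE⟩ := hνK'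
  obtain ⟨hν0, hν1, hνs, hνm⟩ := hνK
  -- the maximizer has chain support
  have hchain : ∀ A B : Finset V, ν A ≠ 0 → ν B ≠ 0 → A ⊆ B ∨ B ⊆ A := by
    intro A B hA hB
    by_contra hcon
    push_neg at hcon
    obtain ⟨ν', h0, h1, h2, h3, hE, hP⟩ :=
      uncross_step g hgsub S p ν hν0 hν1 hνs hνm A B hA hB hcon.1 hcon.2
    have hν'K' : ν' ∈ K' := by
      refine ⟨⟨h0, h1, h2, h3⟩, ?_⟩
      exact le_trans hE hνE
    have := hmax hν'K'
    simp only [Set.mem_setOf_eq] at this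
    exact absurd this (not_le.2 hP)
  -- conclude via the chain case
  have hfinal : (1 - p) * g ∅ ≤ Ex ν :=
    chain_case g hg0 S p hp0 ν hν0 hν1 hνs hνm hchain
  have hEν₀μ : Ex ν₀ ≤ Ex μ := hmin hμK
  calc (1 - p) * f S = (1 - p) * g ∅ := by rw [hgS]
    _ ≤ Ex ν := hfinal
    _ ≤ Ex ν₀ := hνE
    _ ≤ Ex μ := hEν₀μ
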